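/- Let X : H0 -> H1 be an everywhere-defined bounded solution of the Riccati equation A1 X - X A0 - X V X + V* = 0 and let Q be the orthogonal projection of H onto the graph G(H0,X). Then Q is an isolated point, in the operator norm topology, of the set of all orthogonal projections onto closed B-invariant subspaces of H if and only if X is an isolated point, in the operator norm topology, of the set of all bounded solutions of the Riccati equation; that is, there is a neighborhood of X in the bounded operators from H0 to H1 containing no solution other than X. -/

import Mathlib

noncomputable section

set_option linter.unusedSectionVars false

namespace RiccatiIsolatedAux

open ContinuousLinearMap

/-! ### Generic facts about self-adjoint idempotents on a Hilbert space -/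

section Proj

variable {E : Type*} [NormedAddCommGroup E] [InnerProductSpace ℂ E] [CompleteSpace E]

lemma apply_idem {P : E →L[ℂ] E} (h : IsIdempotentElem P) (u : E) : P (P u) = P u := by
  conv_rhs => rw [← h]
  rfl

lemma mem_range_iff {P : E →L[ℂ] E} (h : IsIdempotentElem P) {u : E} :
    u ∈ LinearMap.range P.toLinearMap ↔ P u = u := by
  constructor
  · rintro ⟨v, rfl⟩
    exact apply_idem h v
  · intro hu
    exact ⟨u, hu⟩

lemma sa_inner_move {P : E →L[ℂ] E} (h2 : IsSelfAdjoint P) (a b : E) :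
    inner (𝕜 := ℂ) (P a) b = inner (𝕜 := ℂ) a (P b) := by
  conv_lhs => rw [← h2.adjoint_eq]
  exact ContinuousLinearMap.adjoint_inner_left P b a

lemma norm_apply_le {P : E →L[ℂ] E} (h1 : IsIdempotentElem P) (h2 : IsSelfAdjoint P) (u : E) :
    ‖P u‖ ≤ ‖u‖ := by
  rcases (norm_nonneg (P u)).eq_or_lt with h0 | h0
  · rw [← h0]; exact norm_nonneg u
  · have key : (‖P u‖ : ℝ) ^ 2 = RCLike.re (inner (𝕜 := ℂ) u (P u)) := by
      rw [← inner_self_eq_norm_sq (𝕜 := ℂ)]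
      congr 1
      rw [sa_inner_move h2, apply_idem h1]
    have h3 : RCLike.re (inner (𝕜 := ℂ) u (P u)) ≤ ‖u‖ * ‖P u‖ :=
      le_trans (RCLike.re_le_norm _) (norm_inner_le_norm u (P u))
    nlinarith
 
lemma norm_sub_proj_le {P : E →L[ℂ] E} (h1 : IsIdempotentElem P) (h2 : IsSelfAdjoint P)
    (u z : E) (hz : P z = z) : ‖u - P u‖ ≤ ‖u - z‖ := by
  have h1' : IsIdempotentElem (1 - P) := h1.one_sub
  have h2' : IsSelfAdjoint (1 - P) := (IsSelfAdjoint.one (E →L[ℂ] E)).sub h2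
  have hrw : u - P u = (1 - P) (u - z) := by
    simp only [ContinuousLinearMap.sub_apply, ContinuousLinearMap.one_apply, map_sub, hz]
    abel
  rw [hrw]
  simpa using norm_apply_le h1' h2' (u - z)

lemma inner_proj_orth {P : E →L[ℂ] E} (h1 : IsIdempotentElem P) (h2 : IsSelfAdjoint P)
    (a b : E) : inner (𝕜 := ℂ) (P a) (b - P b) = 0 := by
  rw [sa_inner_move h2, map_sub, apply_idem h1, sub_self, inner_zero_right]

/-- Main quantitative lemma: if each projection nearly fixes the range of the other,
the projections are close in operator norm. -/
lemma norm_proj_diff_le {R Q : E →L[ℂ] E} (hR1 : IsIdempotentElem R) (hR2 : IsSelfAdjoint R)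
    (hQ1 : IsIdempotentElem Q) (hQ2 : IsSelfAdjoint Q) {d : ℝ} (hd : 0 ≤ d)
    (hQR : ∀ v : E, ‖R v - Q (R v)‖ ≤ d * ‖v‖)
    (hRQ : ∀ v : E, ‖Q v - R (Q v)‖ ≤ d * ‖v‖) :
    ‖R - Q‖ ≤ Real.sqrt 2 * d := by
  have hA : ‖(1 - Q) ∘L R‖ ≤ d := by
    refine opNorm_le_bound _ hd fun v => ?_
    simpa using hQR v
  have hadj : ContinuousLinearMap.adjoint ((1 - Q) ∘L R) = R ∘L (1 - Q) := by
    rw [ContinuousLinearMap.adjoint_comp, hR2.adjoint_eq,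
      ((IsSelfAdjoint.one (E →L[ℂ] E)).sub hQ2).adjoint_eq]
  have hB : ‖R ∘L (1 - Q)‖ ≤ d := by
    rw [← hadj]
    calc ‖ContinuousLinearMap.adjoint ((1 - Q) ∘L R)‖
        = ‖(1 - Q) ∘L R‖ := LinearIsometryEquiv.norm_map _ _
      _ ≤ d := hA
  refine opNorm_le_bound _ (by positivity) fun u => ?_
  have hdecomp : (R - Q) u = (R ∘L (1 - Q)) u + -((1 - R) (Q u)) := by
    simp only [ContinuousLinearMap.sub_apply, ContinuousLinearMap.comp_apply,
      ContinuousLinearMap.one_apply, map_sub]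
    abel
  have horth : inner (𝕜 := ℂ) ((R ∘L (1 - Q)) u) (-((1 - R) (Q u))) = 0 := by
    rw [inner_neg_right]
    have := inner_proj_orth hR1 hR2 ((1 - Q) u) (Q u)
    simp only [ContinuousLinearMap.comp_apply, ContinuousLinearMap.sub_apply,
      ContinuousLinearMap.one_apply] at this ⊢
    rw [this, neg_zero]
  have hpyth : ‖(R - Q) u‖ ^ 2
      = ‖(R ∘L (1 - Q)) u‖ ^ 2 + ‖(1 - R) (Q u)‖ ^ 2 := by
    have hp := norm_add_sq_eq_norm_sq_add_norm_sq_of_inner_eq_zero _ _ horth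
    rw [hdecomp, pow_two, hp, norm_neg, ← pow_two, ← pow_two]
  have hb1 : ‖(R ∘L (1 - Q)) u‖ ≤ d * ‖u‖ := by
    calc ‖(R ∘L (1 - Q)) u‖ ≤ ‖R ∘L (1 - Q)‖ * ‖u‖ := le_opNorm _ _
      _ ≤ d * ‖u‖ := by
        apply mul_le_mul_of_nonneg_right hB (norm_nonneg _)
  have hb2 : ‖(1 - R) (Q u)‖ ≤ d * ‖u‖ := by
    simpa using hRQ u
  have hsq : ‖(R - Q) u‖ ^ 2 ≤ 2 * (d * ‖u‖) ^ 2 := by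
    rw [hpyth]
    nlinarith [norm_nonneg ((R ∘L (1 - Q)) u), norm_nonneg ((1 - R) (Q u))]
  have := Real.sqrt_le_sqrt hsq
  rw [Real.sqrt_sq (norm_nonneg _)] at this
  calc ‖(R - Q) u‖ ≤ Real.sqrt (2 * (d * ‖u‖) ^ 2) := this
    _ = Real.sqrt 2 * (d * ‖u‖) := by
      rw [Real.sqrt_mul (by norm_num), Real.sqrt_sq (by positivity)]
    _ = Real.sqrt 2 * d * ‖u‖ := by ring

end Proj

/-! ### Components of `WithLp 2 (H0 × H1)` -/

section Components

variable {H0 H1 : Type*}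
  [NormedAddCommGroup H0] [InnerProductSpace ℂ H0] [CompleteSpace H0]
  [NormedAddCommGroup H1] [InnerProductSpace ℂ H1] [CompleteSpace H1]

/-- First coordinate projection as a continuous linear map. -/
def pfst : WithLp 2 (H0 × H1) →L[ℂ] H0 :=
  (ContinuousLinearMap.fst ℂ H0 H1).comp
    (WithLp.prodContinuousLinearEquiv 2 ℂ H0 H1).toContinuousLinearMap

/-- Second coordinate projection as a continuous linear map. -/
def psnd : WithLp 2 (H0 × H1) →L[ℂ] H1 :=
  (ContinuousLinearMap.snd ℂ H0 H1).comp
    (WithLp.prodContinuousLinearEquiv 2 ℂ H0 H1).toContinuousLinearMap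

/-- The graph embedding `x ↦ (x, Y x)` as a continuous linear map. -/
def emb (Y : H0 →L[ℂ] H1) : H0 →L[ℂ] WithLp 2 (H0 × H1) :=
  (WithLp.prodContinuousLinearEquiv 2 ℂ H0 H1).symm.toContinuousLinearMap.comp
    ((ContinuousLinearMap.id ℂ H0).prod Y)

@[simp] lemma pfst_apply (u : WithLp 2 (H0 × H1)) : pfst u = u.fst := rfl

@[simp] lemma psnd_apply (u : WithLp 2 (H0 × H1)) : psnd u = u.snd := rfl

@[simp] lemma emb_fst (Y : H0 →L[ℂ] H1) (x : H0) : (emb Y x).fst = x := rfl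

@[simp] lemma emb_snd (Y : H0 →L[ℂ] H1) (x : H0) : (emb Y x).snd = Y x := rfl

lemma wl_eq_of_parts {u v : WithLp 2 (H0 × H1)} (h1 : u.fst = v.fst) (h2 : u.snd = v.snd) :
    u = v := by
  apply (WithLp.prodContinuousLinearEquiv 2 ℂ H0 H1).injective
  exact Prod.ext h1 h2

lemma norm_fst_le' (u : WithLp 2 (H0 × H1)) : ‖u.fst‖ ≤ ‖u‖ := by
  calc ‖u.fst‖ = Real.sqrt (‖u.fst‖ ^ 2) := (Real.sqrt_sq (norm_nonneg _)).symm
    _ ≤ Real.sqrt (‖u.fst‖ ^ 2 + ‖u.snd‖ ^ 2) :=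
        Real.sqrt_le_sqrt (le_add_of_nonneg_right (by positivity))
    _ = ‖u‖ := (WithLp.prod_norm_eq_of_L2 u).symm

lemma norm_snd_le' (u : WithLp 2 (H0 × H1)) : ‖u.snd‖ ≤ ‖u‖ := by
  calc ‖u.snd‖ = Real.sqrt (‖u.snd‖ ^ 2) := (Real.sqrt_sq (norm_nonneg _)).symm
    _ ≤ Real.sqrt (‖u.fst‖ ^ 2 + ‖u.snd‖ ^ 2) :=
        Real.sqrt_le_sqrt (le_add_of_nonneg_left (by positivity))
    _ = ‖u‖ := (WithLp.prod_norm_eq_of_L2 u).symm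

lemma norm_le_parts (u : WithLp 2 (H0 × H1)) : ‖u‖ ≤ ‖u.fst‖ + ‖u.snd‖ := by
  rw [WithLp.prod_norm_eq_of_L2]
  have h : ‖u.fst‖ ^ 2 + ‖u.snd‖ ^ 2 ≤ (‖u.fst‖ + ‖u.snd‖) ^ 2 := by
    nlinarith [norm_nonneg u.fst, norm_nonneg u.snd]
  calc Real.sqrt (‖u.fst‖ ^ 2 + ‖u.snd‖ ^ 2) ≤ Real.sqrt ((‖u.fst‖ + ‖u.snd‖) ^ 2) :=
        Real.sqrt_le_sqrt h
    _ = ‖u.fst‖ + ‖u.snd‖ := Real.sqrt_sq (by positivity)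

lemma norm_emb_le (Y : H0 →L[ℂ] H1) (x : H0) : ‖emb Y x‖ ≤ (1 + ‖Y‖) * ‖x‖ := by
  calc ‖emb Y x‖ ≤ ‖(emb Y x).fst‖ + ‖(emb Y x).snd‖ := norm_le_parts _
    _ = ‖x‖ + ‖Y x‖ := by rw [emb_fst, emb_snd]
    _ ≤ ‖x‖ + ‖Y‖ * ‖x‖ := by
        have := Y.le_opNorm x
        linarith
    _ = (1 + ‖Y‖) * ‖x‖ := by ring

lemma mem_graphSub {Y : H0 →L[ℂ] H1} {u : WithLp 2 (H0 × H1)} :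
    u ∈ (LinearMap.graph (Y : H0 →L[ℂ] H1).toLinearMap).map
      (WithLp.linearEquiv 2 ℂ (H0 × H1)).symm.toLinearMap ↔ u.snd = Y u.fst := by
  constructor
  · rintro ⟨⟨a, b⟩, hab, rfl⟩
    simp only [SetLike.mem_coe, LinearMap.mem_graph_iff] at hab
    exact hab
  · intro h
    refine ⟨(u.fst, u.snd), ?_, rfl⟩
    simp only [SetLike.mem_coe, LinearMap.mem_graph_iff]
    exact h

end Components

end RiccatiIsolatedAux

open RiccatiIsolatedAux ContinuousLinearMap

set_option maxHeartbeats 1000000 in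
/-- Let `X : H₀ → H₁` be a bounded solution of the Riccati equation
`A₁ X - X A₀ - X V X + V* = 0` and `Q` the orthogonal projection onto the graph `G(H₀, X)`.
Then `Q` is an isolated point (in the operator norm topology) of the set of all orthogonal
projections onto closed `B`-invariant subspaces of `H = H₀ ⊕ H₁` iff `X` is an isolated point
(in the operator norm topology) of the set of all bounded solutions of the Riccati equation. -/
theorem isolated_projection_iff_isolated_solution
    {H0 H1 : Type*}
    [NormedAddCommGroup H0] [InnerProductSpace ℂ H0] [CompleteSpace H0]
    [TopologicalSpace.SeparableSpace H0]
    [NormedAddCommGroup H1] [InnerProductSpace ℂ H1] [CompleteSpace H1]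
    [TopologicalSpace.SeparableSpace H1]
    (A0 : H0 →L[ℂ] H0) (A1 : H1 →L[ℂ] H1) (V : H1 →L[ℂ] H0)
    (hA0 : IsSelfAdjoint A0) (hA1 : IsSelfAdjoint A1)
    (B : WithLp 2 (H0 × H1) →L[ℂ] WithLp 2 (H0 × H1))
    (hB : ∀ u : WithLp 2 (H0 × H1),
      WithLp.equiv 2 (H0 × H1) (B u) =
        (A0 (WithLp.equiv 2 (H0 × H1) u).1 + V (WithLp.equiv 2 (H0 × H1) u).2,
         ContinuousLinearMap.adjoint V (WithLp.equiv 2 (H0 × H1) u).1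
           + A1 (WithLp.equiv 2 (H0 × H1) u).2))
    (X : H0 →L[ℂ] H1)
    (hX : A1.comp X - X.comp A0 - X.comp (V.comp X) + ContinuousLinearMap.adjoint V = 0)
    (Q : WithLp 2 (H0 × H1) →L[ℂ] WithLp 2 (H0 × H1))
    (hQ : IsIdempotentElem Q) (hQsa : IsSelfAdjoint Q)
    (hQran : LinearMap.range Q.toLinearMap =
      (LinearMap.graph X.toLinearMap).map (WithLp.linearEquiv 2 ℂ (H0 × H1)).symm.toLinearMap) :
    -- `Q` is isolated among the orthogonal projections onto closed `B`-invariant subspaces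
    (∃ ε > (0 : ℝ), ∀ R : WithLp 2 (H0 × H1) →L[ℂ] WithLp 2 (H0 × H1),
        IsIdempotentElem R → IsSelfAdjoint R →
        (∀ u ∈ LinearMap.range R.toLinearMap, B u ∈ LinearMap.range R.toLinearMap) →
        ‖R - Q‖ < ε → R = Q) ↔
    -- `X` is isolated among the bounded solutions of the Riccati equation
    (∃ ε > (0 : ℝ), ∀ Y : H0 →L[ℂ] H1,
        A1.comp Y - Y.comp A0 - Y.comp (V.comp Y) + ContinuousLinearMap.adjoint V = 0 →
        ‖Y - X‖ < ε → Y = X) := by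
  -- components of `B`
  have Bfst : ∀ u : WithLp 2 (H0 × H1), (B u).fst = A0 u.fst + V u.snd :=
    fun u => congrArg Prod.fst (hB u)
  have Bsnd : ∀ u : WithLp 2 (H0 × H1),
      (B u).snd = ContinuousLinearMap.adjoint V u.fst + A1 u.snd :=
    fun u => congrArg Prod.snd (hB u)
  -- Riccati equation ↔ pointwise invariance of the graph
  have key : ∀ Y : H0 →L[ℂ] H1,
      (A1.comp Y - Y.comp A0 - Y.comp (V.comp Y) + ContinuousLinearMap.adjoint V = 0) ↔
      (∀ u : WithLp 2 (H0 × H1), u.snd = Y u.fst → (B u).snd = Y ((B u).fst)) := by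
    intro Y
    constructor
    · intro hric u hu
      have hpt : A1 (Y u.fst) - Y (A0 u.fst) - Y (V (Y u.fst))
          + ContinuousLinearMap.adjoint V u.fst = 0 := by
        have := ContinuousLinearMap.ext_iff.1 hric u.fst
        simpa only [ContinuousLinearMap.add_apply, ContinuousLinearMap.sub_apply,
          ContinuousLinearMap.comp_apply, ContinuousLinearMap.zero_apply] using this
      rw [Bsnd, Bfst, hu, ← sub_eq_zero, map_add]
      calc ContinuousLinearMap.adjoint V u.fst + A1 (Y u.fst)
            - (Y (A0 u.fst) + Y (V (Y u.fst)))
          = A1 (Y u.fst) - Y (A0 u.fst) - Y (V (Y u.fst))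
            + ContinuousLinearMap.adjoint V u.fst := by abel
        _ = 0 := hpt
    · intro hinv
      ext a
      have h := hinv (emb Y a) (by rw [emb_fst, emb_snd])
      rw [Bsnd, Bfst, emb_fst, emb_snd, map_add] at h
      simp only [ContinuousLinearMap.add_apply, ContinuousLinearMap.sub_apply,
        ContinuousLinearMap.comp_apply, ContinuousLinearMap.zero_apply]
      rw [← sub_eq_zero] at h ⊢
      calc A1 (Y a) - Y (A0 a) - Y (V (Y a)) + ContinuousLinearMap.adjoint V a - 0
          = ContinuousLinearMap.adjoint V a + A1 (Y a)
            - (Y (A0 a) + Y (V (Y a))) := by abel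
        _ = 0 := h
  -- membership in range of Q
  have memQ : ∀ u : WithLp 2 (H0 × H1), u ∈ LinearMap.range Q.toLinearMap ↔ u.snd = X u.fst := by
    intro u
    rw [hQran]
    exact mem_graphSub
  have fixQ : ∀ u : WithLp 2 (H0 × H1), u.snd = X u.fst → Q u = u := by
    intro u hu
    exact (mem_range_iff hQ).1 ((memQ u).2 hu)
  constructor
  · -- Q isolated ⇒ X isolated
    rintro ⟨ε, hε, hiso⟩
    refine ⟨ε / 2, by positivity, fun Y hY hYX => ?_⟩
    -- the graph of Y is a closed subspace
    set g : WithLp 2 (H0 × H1) →L[ℂ] H1 := psnd - Y.comp pfst with hg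
    set K : Submodule ℂ (WithLp 2 (H0 × H1)) := LinearMap.ker g.toLinearMap with hK
    have memK : ∀ u : WithLp 2 (H0 × H1), u ∈ K ↔ u.snd = Y u.fst := by
      intro u
      rw [hK, LinearMap.mem_ker]
      have : g u = u.snd - Y u.fst := by
        simp [hg, ContinuousLinearMap.sub_apply]
      rw [ContinuousLinearMap.coe_coe, this, sub_eq_zero]
    have hKclosed : IsClosed (K : Set (WithLp 2 (H0 × H1))) :=
      ContinuousLinearMap.isClosed_ker g
    haveI : CompleteSpace K := hKclosed.completeSpace_coe
    set R : WithLp 2 (H0 × H1) →L[ℂ] WithLp 2 (H0 × H1) :=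
      K.subtypeL ∘L K.orthogonalProjectionOnto with hR
    have fixR : ∀ u : WithLp 2 (H0 × H1), u ∈ K → R u = u := by
      intro u hu
      have : K.orthogonalProjectionOnto u = ⟨u, hu⟩ := by
        have := Submodule.orthogonalProjectionOnto_mem_subspace_eq_self (K := K) ⟨u, hu⟩
        simpa using this
      simp [hR, this]
    have hRK : ∀ u : WithLp 2 (H0 × H1), R u ∈ K := fun u => (K.orthogonalProjectionOnto u).2
    have hRidem : IsIdempotentElem R := by
      apply ContinuousLinearMap.ext
      intro u
      exact (fixR (R u) (hRK u)).trans rfl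
    have hRsa : IsSelfAdjoint R := isSelfAdjoint_starProjection K
    have memR : ∀ u : WithLp 2 (H0 × H1), u ∈ LinearMap.range R.toLinearMap ↔ u.snd = Y u.fst := by
      intro u
      rw [mem_range_iff hRidem]
      constructor
      · intro hu
        rw [← hu]
        exact (memK _).1 (hRK u)
      · intro hu
        exact fixR u ((memK u).2 hu)
    -- invariance of range R under B
    have hRinv : ∀ u ∈ LinearMap.range R.toLinearMap, B u ∈ LinearMap.range R.toLinearMap := by
      intro u hu
      rw [memR] at hu ⊢
      exact (key Y).1 hY u hu
    -- norm estimate ‖R - Q‖ ≤ √2 ‖Y - X‖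
    set d : ℝ := ‖Y - X‖ with hd
    have hd0 : 0 ≤ d := norm_nonneg _
    have hQR : ∀ v, ‖R v - Q (R v)‖ ≤ d * ‖v‖ := by
      intro v
      have hmem : (R v).snd = Y ((R v).fst) := (memK _).1 (hRK v)
      set z : WithLp 2 (H0 × H1) := emb X ((R v).fst) with hz
      have hzfix : Q z = z := fixQ z (by rw [hz, emb_snd, emb_fst])
      have h1 : ‖R v - Q (R v)‖ ≤ ‖R v - z‖ := norm_sub_proj_le hQ hQsa (R v) z hzfix
      have h2 : ‖R v - z‖ ≤ d * ‖v‖ := by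
        have hfst : (R v - z).fst = 0 := by
          simp only [WithLp.sub_fst, hz, emb_fst, sub_self]
        have hsnd : (R v - z).snd = (Y - X) ((R v).fst) := by
          simp only [WithLp.sub_snd, hz, emb_snd, hmem, ContinuousLinearMap.sub_apply]
        calc ‖R v - z‖ ≤ ‖(R v - z).fst‖ + ‖(R v - z).snd‖ := norm_le_parts _
          _ = ‖(Y - X) ((R v).fst)‖ := by rw [hfst, hsnd]; simp
          _ ≤ d * ‖(R v).fst‖ := (Y - X).le_opNorm _
          _ ≤ d * ‖R v‖ := by
              apply mul_le_mul_of_nonneg_left (norm_fst_le' _) hd0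
          _ ≤ d * ‖v‖ := by
              apply mul_le_mul_of_nonneg_left (norm_apply_le hRidem hRsa v) hd0
      exact h1.trans h2
    have hRQ : ∀ v, ‖Q v - R (Q v)‖ ≤ d * ‖v‖ := by
      intro v
      have hmem : (Q v).snd = X ((Q v).fst) := (memQ _).1 ⟨v, rfl⟩
      set z : WithLp 2 (H0 × H1) := emb Y ((Q v).fst) with hz
      have hzfix : R z = z := fixR z ((memK z).2 (by rw [hz, emb_snd, emb_fst]))
      have h1 : ‖Q v - R (Q v)‖ ≤ ‖Q v - z‖ := norm_sub_proj_le hRidem hRsa (Q v) z hzfix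
      have h2 : ‖Q v - z‖ ≤ d * ‖v‖ := by
        have hfst : (Q v - z).fst = 0 := by
          simp only [WithLp.sub_fst, hz, emb_fst, sub_self]
        have hsnd : (Q v - z).snd = -((Y - X) ((Q v).fst)) := by
          simp only [WithLp.sub_snd, hz, emb_snd, hmem, ContinuousLinearMap.sub_apply]
          abel
        calc ‖Q v - z‖ ≤ ‖(Q v - z).fst‖ + ‖(Q v - z).snd‖ := norm_le_parts _
          _ = ‖(Y - X) ((Q v).fst)‖ := by rw [hfst, hsnd]; simp [norm_sub_rev]
          _ ≤ d * ‖(Q v).fst‖ := (Y - X).le_opNorm _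
          _ ≤ d * ‖Q v‖ := by
              apply mul_le_mul_of_nonneg_left (norm_fst_le' _) hd0
          _ ≤ d * ‖v‖ := by
              apply mul_le_mul_of_nonneg_left (norm_apply_le hQ hQsa v) hd0
      exact h1.trans h2
    have hnorm : ‖R - Q‖ < ε := by
      have h1 : ‖R - Q‖ ≤ Real.sqrt 2 * d :=
        norm_proj_diff_le hRidem hRsa hQ hQsa hd0 hQR hRQ
      have hs2 : Real.sqrt 2 < 2 := by
        nlinarith [Real.sq_sqrt (show (0:ℝ) ≤ 2 by norm_num), Real.sqrt_nonneg 2]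
      have hs0 : (0 : ℝ) < Real.sqrt 2 := by positivity
      have : Real.sqrt 2 * d < 2 * (ε / 2) := by
        rcases hd0.eq_or_lt with h | h
        · rw [← h]; simpa using hε
        · calc Real.sqrt 2 * d < 2 * d := by nlinarith
            _ < 2 * (ε / 2) := by
              apply mul_lt_mul_of_pos_left hYX (by norm_num)
      calc ‖R - Q‖ ≤ Real.sqrt 2 * d := h1
        _ < 2 * (ε / 2) := this
        _ = ε := by ring
    have hRQeq : R = Q := hiso R hRidem hRsa hRinv hnorm
    -- conclude Y = X
    ext x
    have h1 : emb Y x ∈ LinearMap.range R.toLinearMap := (memR _).2 (by rw [emb_fst, emb_snd])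
    rw [hRQeq, memQ, emb_fst, emb_snd] at h1
    exact h1
  · -- X isolated ⇒ Q isolated
    rintro ⟨ε, hε, hiso⟩
    set c : ℝ := 1 + ‖X‖ with hc
    have hc0 : (0 : ℝ) < c := by positivity
    have hc1 : (1 : ℝ) ≤ c := by
      rw [hc]; linarith [norm_nonneg X]
    set δ : ℝ := min (1 / (2 * c)) (ε / (2 * c ^ 2)) with hδdef
    have hδ0 : 0 < δ := by
      apply lt_min
      · positivity
      · positivity
    have hδle1 : δ ≤ 1 / (2 * c) := by rw [hδdef]; exact min_le_left _ _
    have hδle2 : δ ≤ ε / (2 * c ^ 2) := by rw [hδdef]; exact min_le_right _ _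
    clear_value c δ
    refine ⟨δ, hδ0, fun R hRidem hRsa hRinv hRQ => ?_⟩
    set d : ℝ := ‖R - Q‖ with hd
    have hd0 : 0 ≤ d := norm_nonneg _
    have hdδ : d < δ := hRQ
    clear_value d
    have hcd : c * d < 1 / 2 := by
      have h1 : d < 1 / (2 * c) := lt_of_lt_of_le hdδ hδle1
      have hval : c * (1 / (2 * c)) = 1 / 2 := by
        rw [mul_one_div, div_eq_div_iff (by linarith) (by norm_num)]
        ring
      calc c * d < c * (1 / (2 * c)) := by
            apply mul_lt_mul_of_pos_left h1 hc0
        _ = 1 / 2 := hval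
    have hdε : d < ε / (2 * c ^ 2) := lt_of_lt_of_le hdδ hδle2
    have fixR : ∀ u ∈ LinearMap.range R.toLinearMap, R u = u := fun u hu => (mem_range_iff hRidem).1 hu
    -- norm of (R - Q) applied
    have hRQapp : ∀ w : WithLp 2 (H0 × H1), ‖R w - Q w‖ ≤ d * ‖w‖ := by
      intro w
      calc ‖R w - Q w‖ = ‖(R - Q) w‖ := by rw [ContinuousLinearMap.sub_apply]
        _ ≤ ‖R - Q‖ * ‖w‖ := (R - Q).le_opNorm w
        _ = d * ‖w‖ := by rw [hd]
    -- the operator T = pfst ∘ R ∘ emb X is close to the identity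
    set T : H0 →L[ℂ] H0 := pfst ∘L (R ∘L emb X) with hT
    have hQemb : ∀ x : H0, Q (emb X x) = emb X x :=
      fun x => fixQ _ (by rw [emb_fst, emb_snd])
    have hTx : ∀ x : H0, ‖x - T x‖ ≤ c * d * ‖x‖ := by
      intro x
      have h1 : x - T x = pfst (Q (emb X x) - R (emb X x)) := by
        rw [map_sub, hQemb]
        simp [hT]
      calc ‖x - T x‖ = ‖(Q (emb X x) - R (emb X x)).fst‖ := by rw [h1, pfst_apply]
        _ ≤ ‖Q (emb X x) - R (emb X x)‖ := norm_fst_le' _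
        _ = ‖R (emb X x) - Q (emb X x)‖ := by rw [norm_sub_rev]
        _ ≤ d * ‖emb X x‖ := hRQapp _
        _ ≤ d * (c * ‖x‖) := by
            apply mul_le_mul_of_nonneg_left _ hd0
            rw [hc]
            exact norm_emb_le X x
        _ = c * d * ‖x‖ := by ring
    have hTnorm : ‖1 - T‖ < 1 := by
      have h1 : ‖1 - T‖ ≤ c * d := by
        apply opNorm_le_bound _ (by positivity)
        intro x
        simpa using hTx x
      exact lt_of_le_of_lt h1 (by linarith)
    set U : (H0 →L[ℂ] H0)ˣ := Units.oneSub (1 - T) hTnorm with hU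
    have hUval : (U : H0 →L[ℂ] H0) = T := by
      rw [hU, Units.val_oneSub, sub_sub_cancel]
    set S : H0 →L[ℂ] H0 := (↑U⁻¹ : H0 →L[ℂ] H0) with hS
    have hTS : ∀ x : H0, T (S x) = x := by
      intro x
      have h1 : (U : H0 →L[ℂ] H0) * S = 1 := by rw [hS]; exact U.mul_inv
      rw [hUval] at h1
      calc T (S x) = (T * S) x := rfl
        _ = (1 : H0 →L[ℂ] H0) x := by rw [h1]
        _ = x := rfl
    set Y : H0 →L[ℂ] H1 := psnd ∘L (R ∘L (emb X ∘L S)) with hY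
    -- range R = graph of Y
    have hWfst : ∀ x : H0, (R (emb X (S x))).fst = x := fun x => hTS x
    have hWsnd : ∀ x : H0, (R (emb X (S x))).snd = Y x := fun x => rfl
    have hgraphR : ∀ x : H0, emb Y x = R (emb X (S x)) := by
      intro x
      apply wl_eq_of_parts
      · rw [emb_fst, hWfst]
      · rw [emb_snd, hWsnd]
    have memR : ∀ u : WithLp 2 (H0 × H1), u ∈ LinearMap.range R.toLinearMap ↔ u.snd = Y u.fst := by
      intro u
      constructor
      · intro hu
        -- v := u - R (emb X (S u.fst)) lies in range R and has vanishing first component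
        set w : WithLp 2 (H0 × H1) := R (emb X (S u.fst)) with hw
        set v : WithLp 2 (H0 × H1) := u - w with hv
        have hvmem : v ∈ LinearMap.range R.toLinearMap := by
          rw [hv, hw]
          exact Submodule.sub_mem _ hu ⟨_, rfl⟩
        clear_value w v
        have hvfix : R v = v := fixR v hvmem
        have hvfst : v.fst = 0 := by
          rw [hv, WithLp.sub_fst, hw, hWfst, sub_self]
        -- show v = 0
        have hvzero : v = 0 := by
          have hvQ : ‖v - Q v‖ ≤ d * ‖v‖ := by
            calc ‖v - Q v‖ = ‖R v - Q v‖ := by rw [hvfix]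
              _ ≤ d * ‖v‖ := hRQapp v
          have hQv : (Q v).snd = X ((Q v).fst) := (memQ _).1 ⟨v, rfl⟩
          have ha : ‖(Q v).fst‖ ≤ d * ‖v‖ := by
            calc ‖(Q v).fst‖ = ‖(v - Q v).fst‖ := by
                  rw [WithLp.sub_fst, hvfst, zero_sub, norm_neg]
              _ ≤ ‖v - Q v‖ := norm_fst_le' _
              _ ≤ d * ‖v‖ := hvQ
          have hsnd : ‖v.snd‖ ≤ c * d * ‖v‖ := by
            have hid : v.snd = v.snd - (Q v).snd + X ((Q v).fst) := by
              rw [← hQv]; abel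
            calc ‖v.snd‖ = ‖(v - Q v).snd + X ((Q v).fst)‖ := congrArg norm hid
              _ ≤ ‖(v - Q v).snd‖ + ‖X ((Q v).fst)‖ := norm_add_le _ _
              _ ≤ ‖v - Q v‖ + ‖X‖ * ‖(Q v).fst‖ :=
                  add_le_add (norm_snd_le' _) (X.le_opNorm _)
              _ ≤ d * ‖v‖ + ‖X‖ * (d * ‖v‖) :=
                  add_le_add hvQ
                    (mul_le_mul_of_nonneg_left ha (norm_nonneg X))
              _ = c * d * ‖v‖ := by rw [hc]; ring
          have hvle : ‖v‖ ≤ c * d * ‖v‖ := by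
            calc ‖v‖ ≤ ‖v.fst‖ + ‖v.snd‖ := norm_le_parts v
              _ = ‖v.snd‖ := by rw [hvfst, norm_zero, zero_add]
              _ ≤ c * d * ‖v‖ := hsnd
          have h2 : c * d * ‖v‖ ≤ (1 / 2) * ‖v‖ :=
            mul_le_mul_of_nonneg_right hcd.le (norm_nonneg v)
          have h3 : ‖v‖ ≤ 0 := by linarith
          exact norm_eq_zero.1 (le_antisymm h3 (norm_nonneg v))
        have huw : u = w := by
          have h0 : u - w = 0 := by rw [← hv]; exact hvzero
          exact sub_eq_zero.1 h0
        rw [huw, hw, hWsnd, hWfst]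
      · intro hu
        have : u = emb Y u.fst := wl_eq_of_parts (by rw [emb_fst]) (by rw [emb_snd, hu])
        rw [this, hgraphR]
        exact ⟨_, rfl⟩
    -- Y is close to X
    have hYX : ‖Y - X‖ < ε := by
      have hptw : ∀ x : H0, ‖(Y - X) x‖ ≤ 2 * c ^ 2 * d * ‖x‖ := by
        intro x
        set w : WithLp 2 (H0 × H1) := emb Y x with hw
        have hwmem : w ∈ LinearMap.range R.toLinearMap := by
          rw [hw, hgraphR]; exact ⟨_, rfl⟩
        clear_value w
        have hwfix : R w = w := fixR w hwmem
        have hwQ : ‖w - Q w‖ ≤ d * ‖w‖ := by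
          calc ‖w - Q w‖ = ‖R w - Q w‖ := by rw [hwfix]
            _ ≤ d * ‖w‖ := hRQapp w
        have hQw : (Q w).snd = X ((Q w).fst) := (memQ _).1 ⟨w, rfl⟩
        have hdiff : Y x - X x = (w - Q w).snd - X ((w - Q w).fst) := by
          rw [WithLp.sub_snd, WithLp.sub_fst, hQw, map_sub, hw, emb_snd, emb_fst]
          abel
        have hYXx : ‖Y x - X x‖ ≤ c * d * ‖w‖ := by
          calc ‖Y x - X x‖ = ‖(w - Q w).snd - X ((w - Q w).fst)‖ := by rw [hdiff]
            _ ≤ ‖(w - Q w).snd‖ + ‖X ((w - Q w).fst)‖ := norm_sub_le _ _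
            _ ≤ ‖w - Q w‖ + ‖X‖ * ‖(w - Q w).fst‖ :=
                add_le_add (norm_snd_le' _) (X.le_opNorm _)
            _ ≤ ‖w - Q w‖ + ‖X‖ * ‖w - Q w‖ :=
                add_le_add le_rfl
                  (mul_le_mul_of_nonneg_left (norm_fst_le' _) (norm_nonneg X))
            _ = c * ‖w - Q w‖ := by rw [hc]; ring
            _ ≤ c * (d * ‖w‖) := by
                apply mul_le_mul_of_nonneg_left hwQ hc0.le
            _ = c * d * ‖w‖ := by ring
        have hwle : ‖w‖ ≤ 2 * c * ‖x‖ := by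
          have h1 : ‖w‖ ≤ c * ‖x‖ + ‖Y x - X x‖ := by
            calc ‖w‖ ≤ ‖w.fst‖ + ‖w.snd‖ := norm_le_parts w
              _ = ‖x‖ + ‖Y x‖ := by rw [hw, emb_fst, emb_snd]
              _ ≤ ‖x‖ + (‖X x‖ + ‖Y x - X x‖) := by
                  have : ‖Y x‖ ≤ ‖X x‖ + ‖Y x - X x‖ := by
                    calc ‖Y x‖ = ‖X x + (Y x - X x)‖ := by congr 1; abel
                      _ ≤ ‖X x‖ + ‖Y x - X x‖ := norm_add_le _ _
                  linarith
              _ ≤ ‖x‖ + (‖X‖ * ‖x‖ + ‖Y x - X x‖) := by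
                  have := X.le_opNorm x
                  linarith
              _ = c * ‖x‖ + ‖Y x - X x‖ := by rw [hc]; ring
          have h2 : c * d * ‖w‖ ≤ (1 / 2) * ‖w‖ :=
            mul_le_mul_of_nonneg_right hcd.le (norm_nonneg w)
          have h3 : ‖w‖ ≤ c * ‖x‖ + (1 / 2) * ‖w‖ := by
            calc ‖w‖ ≤ c * ‖x‖ + ‖Y x - X x‖ := h1
              _ ≤ c * ‖x‖ + c * d * ‖w‖ := by linarith [hYXx]
              _ ≤ c * ‖x‖ + (1 / 2) * ‖w‖ := by linarith
          linarith
        calc ‖(Y - X) x‖ = ‖Y x - X x‖ := by rw [ContinuousLinearMap.sub_apply]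
          _ ≤ c * d * ‖w‖ := hYXx
          _ ≤ c * d * (2 * c * ‖x‖) := by
              apply mul_le_mul_of_nonneg_left hwle (by positivity)
          _ = 2 * c ^ 2 * d * ‖x‖ := by ring
      have hop : ‖Y - X‖ ≤ 2 * c ^ 2 * d :=
        opNorm_le_bound _ (by positivity) hptw
      calc ‖Y - X‖ ≤ 2 * c ^ 2 * d := hop
        _ < 2 * c ^ 2 * (ε / (2 * c ^ 2)) := by
            apply mul_lt_mul_of_pos_left hdε (by positivity)
        _ = ε := by field_simp
    -- Y solves the Riccati equation
    have hYric : A1.comp Y - Y.comp A0 - Y.comp (V.comp Y)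
        + ContinuousLinearMap.adjoint V = 0 := by
      rw [key Y]
      intro u hu
      have h1 : B u ∈ LinearMap.range R.toLinearMap := hRinv u ((memR u).2 hu)
      exact (memR _).1 h1
    -- conclude Y = X and then R = Q
    have hYeq : Y = X := hiso Y hYric hYX
    -- ranges of R and Q agree
    have hQR' : ∀ u : WithLp 2 (H0 × H1), Q (R u) = R u := by
      intro u
      apply fixQ
      have := (memR (R u)).1 ⟨u, rfl⟩
      rw [hYeq] at this
      exact this
    have hRQ' : ∀ u : WithLp 2 (H0 × H1), R (Q u) = Q u := by
      intro u
      apply fixR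
      rw [memR, hYeq]
      exact (memQ (Q u)).1 ⟨u, rfl⟩
    have hQRmul : Q * R = R := ContinuousLinearMap.ext fun u => hQR' u
    have hRQmul : R * Q = Q := ContinuousLinearMap.ext fun u => hRQ' u
    calc R = star R := hRsa.symm
      _ = star (Q * R) := by rw [hQRmul]
      _ = star R * star Q := star_mul Q R
      _ = R * Q := by rw [hRsa, hQsa]
      _ = Q := hRQmul

end
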